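/- Let I be an interval partition and let A ⊆ ℕ be such that for each l ≥ 0 there exists N such that for all n ≥ N: (1) |A ∩ I_n| / |I_n| ≤ 2^{−l}, and (2) any two distinct i, j ∈ A ∩ I_n satisfy |i − j| > 2^{l−1}. Then A has asymptotic density zero. -/

import Mathlib

open Filter Set Cardinal

/-- A set of naturals has asymptotic density zero. -/
def DensityZero (A : Set ℕ) : Prop :=
  Tendsto (fun n : ℕ => ((A ∩ Set.Iio n).ncard : ℝ) / n) atTop (nhds 0)

/-- An interval partition is a strictly increasing `I : ℕ → ℕ` with `I 0 = 0`;
the `n`-th interval is `[I n, I (n+1))`. -/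
def IsIntervalPartition (I : ℕ → ℕ) : Prop := I 0 = 0 ∧ StrictMono I


lemma ncard_Iio_nat (n : ℕ) : (Set.Iio n).ncard = n := by
  rw [Set.ncard_eq_toFinset_card']; simp

lemma spacing_card (S : Set ℕ) (a b g : ℕ) (hg : 0 < g) (hsub : S ⊆ Set.Ico a b)
    (hsep : ∀ i ∈ S, ∀ j ∈ S, i ≠ j → (g : ℝ) < |(i : ℝ) - (j : ℝ)|) :
    S.ncard ≤ (b - a) / g + 1 := by
  have hfin : S.Finite := (Set.finite_Ico a b).subset hsub
  set f : ℕ → ℕ := fun x => (x - a) / g with hf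
  have hgap : ∀ x ∈ S, ∀ y ∈ S, x < y → x + g + 1 ≤ y := by
    intro x hx y hy hxy
    have := hsep x hx y hy (Nat.ne_of_lt hxy)
    have h2 : |(x : ℝ) - y| = ((y - x : ℕ) : ℝ) := by
      rw [abs_sub_comm, abs_of_nonneg (sub_nonneg.2 (by exact_mod_cast hxy.le))]
      push_cast [Nat.cast_sub hxy.le]; ring
    rw [h2, Nat.cast_lt] at this
    omega
  have hinj : Set.InjOn f S := by
    intro x hx y hy hxy
    by_contra hne
    rcases Nat.lt_or_ge x y with hlt | hge
    · have hax : a ≤ x := (hsub hx).1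
      have := hgap x hx y hy hlt
      have h1 : (x - a + g) / g ≤ (y - a) / g := Nat.div_le_div_right (by omega)
      rw [Nat.add_div_right _ hg] at h1
      simp only [hf] at hxy; omega
    · have hlt : y < x := by omega
      have hay : a ≤ y := (hsub hy).1
      have := hgap y hy x hx hlt
      have h1 : (y - a + g) / g ≤ (x - a) / g := Nat.div_le_div_right (by omega)
      rw [Nat.add_div_right _ hg] at h1
      simp only [hf] at hxy; omega
  have himg : f '' S ⊆ Set.Iio ((b - a) / g + 1) := by
    rintro _ ⟨x, hx, rfl⟩
    have hxb : x < b := (hsub hx).2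
    have : (x - a) / g ≤ (b - a) / g := Nat.div_le_div_right (by omega)
    simp only [Set.mem_Iio, hf]; omega
  calc S.ncard = (f '' S).ncard := (Set.ncard_image_of_injOn hinj).symm
    _ ≤ (Set.Iio ((b - a) / g + 1)).ncard :=
        Set.ncard_le_ncard himg (Set.finite_Iio _)
    _ = (b - a) / g + 1 := _root_.ncard_Iio_nat _

lemma count_le_aux (I : ℕ → ℕ) (hmono : StrictMono I) (A : Set ℕ) (l N : ℕ)
    (hb : ∀ n ≥ N, ((A ∩ Set.Ico (I n) (I (n + 1))).ncard : ℝ)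
        ≤ (1 / 2 ^ l) * ((I (n + 1) - I n : ℕ) : ℝ)) :
    ∀ m, N ≤ m → ((A ∩ Set.Iio (I m)).ncard : ℝ) ≤ (I N : ℝ) + (1 / 2 ^ l) * (I m : ℝ) := by
  intro m hm
  induction m, hm using Nat.le_induction with
  | base =>
      have h1 : (A ∩ Set.Iio (I N)).ncard ≤ (Set.Iio (I N)).ncard :=
        Set.ncard_le_ncard Set.inter_subset_right (Set.finite_Iio _)
      rw [_root_.ncard_Iio_nat] at h1
      have h1' : ((A ∩ Set.Iio (I N)).ncard : ℝ) ≤ (I N : ℝ) := by exact_mod_cast h1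
      have : (0:ℝ) ≤ (1 / 2 ^ l) * (I N : ℝ) := by positivity
      linarith
  | succ m hm ih =>
      have hle : I m ≤ I (m + 1) := (hmono (Nat.lt_succ_self m)).le
      have hsplit : A ∩ Set.Iio (I (m + 1))
          = (A ∩ Set.Iio (I m)) ∪ (A ∩ Set.Ico (I m) (I (m + 1))) := by
        rw [← Set.inter_union_distrib_left, Set.Iio_union_Ico_eq_Iio hle]
      have hcard : (A ∩ Set.Iio (I (m + 1))).ncard
          ≤ (A ∩ Set.Iio (I m)).ncard + (A ∩ Set.Ico (I m) (I (m + 1))).ncard := by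
        rw [hsplit]
        exact Set.ncard_union_le _ _
      have h2 := hb m hm
      have hcast : ((I (m + 1) - I m : ℕ) : ℝ) = (I (m + 1) : ℝ) - (I m : ℝ) :=
        Nat.cast_sub hle
      rw [hcast] at h2
      have : ((A ∩ Set.Iio (I (m + 1))).ncard : ℝ)
          ≤ ((A ∩ Set.Iio (I m)).ncard : ℝ) + ((A ∩ Set.Ico (I m) (I (m + 1))).ncard : ℝ) := by
        exact_mod_cast hcard
      have hpos : (0:ℝ) < 1 / 2 ^ l := by positivity
      nlinarith [ih]

theorem stmt10 (I : ℕ → ℕ) (hI : IsIntervalPartition I) (A : Set ℕ)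
    (h : ∀ l : ℕ, ∃ N : ℕ, ∀ n ≥ N,
      (((A ∩ Set.Ico (I n) (I (n + 1))).ncard : ℝ) / ((I (n + 1) - I n : ℕ) : ℝ)
          ≤ 1 / 2 ^ l) ∧
      (∀ i ∈ A ∩ Set.Ico (I n) (I (n + 1)), ∀ j ∈ A ∩ Set.Ico (I n) (I (n + 1)),
        i ≠ j → (2 : ℝ) ^ ((l : ℤ) - 1) < |(i : ℝ) - (j : ℝ)|)) :
    DensityZero A := by
  unfold DensityZero
  obtain ⟨hI0, hmono⟩ := hI
  rw [Metric.tendsto_atTop]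
  intro ε hε
  obtain ⟨l, hl⟩ : ∃ l : ℕ, ((1:ℝ)/2) ^ l < ε / 8 :=
    exists_pow_lt_of_lt_one (by linarith) (by norm_num)
  have hl' : (1:ℝ) / 2 ^ l < ε / 8 := by
    rwa [div_pow, one_pow] at hl
  set L := l + 1 with hLdef
  obtain ⟨N, hN⟩ := h L
  -- product form of the density bound
  have hb : ∀ n ≥ N, ((A ∩ Set.Ico (I n) (I (n + 1))).ncard : ℝ)
      ≤ (1 / 2 ^ L) * ((I (n + 1) - I n : ℕ) : ℝ) := by
    intro n hn
    have hlen : 0 < I (n + 1) - I n := by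
      have := hmono (show n < n + 1 by omega); omega
    have hlen' : (0:ℝ) < ((I (n + 1) - I n : ℕ) : ℝ) := by exact_mod_cast hlen
    have := (hN n hn).1
    rw [div_le_iff₀ hlen'] at this
    linarith
  have hcount := count_le_aux I hmono A L N hb
  -- choose threshold
  set n₀ := max (I N + 1) (⌈(2 * ((I N : ℝ) + 1)) / ε⌉₊ + 1) with hn₀
  refine ⟨n₀, fun n hn => ?_⟩
  have hnIN : I N + 1 ≤ n := le_trans (le_max_left _ _) hn
  have hn0 : (0:ℝ) < n := by
    have : 0 < n := by omega
    exact_mod_cast this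
  -- I N + 1 < ε n / 2
  have hbig : (I N : ℝ) + 1 < ε * n / 2 := by
    have h1 : (⌈(2 * ((I N : ℝ) + 1)) / ε⌉₊ + 1 : ℕ) ≤ n := le_trans (le_max_right _ _) hn
    have h2 : (2 * ((I N : ℝ) + 1)) / ε < n := by
      calc (2 * ((I N : ℝ) + 1)) / ε ≤ (⌈(2 * ((I N : ℝ) + 1)) / ε⌉₊ : ℝ) := Nat.le_ceil _
        _ < n := by exact_mod_cast h1
    rw [div_lt_iff₀ hε] at h2
    linarith
  -- locate n in an interval
  have hex : ∃ k, n < I k := ⟨n + 1, lt_of_lt_of_le (Nat.lt_succ_self n) (hmono.le_apply)⟩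
  set M := Nat.find hex with hM
  have hMspec : n < I M := Nat.find_spec hex
  have hM0 : M ≠ 0 := by
    intro h0
    rw [h0, hI0] at hMspec; omega
  set m := M - 1 with hm
  have hMm : M = m + 1 := by omega
  have hmn : I m ≤ n := by
    have := Nat.find_min hex (show m < M by omega)
    omega
  have hnm1 : n < I (m + 1) := by rw [← hMm]; exact hMspec
  have hmN : N ≤ m := by
    by_contra hc
    have : I (m + 1) ≤ I N := hmono.monotone (by omega)
    omega
  -- decompose
  have hsplit : A ∩ Set.Iio n = (A ∩ Set.Iio (I m)) ∪ (A ∩ Set.Ico (I m) n) := by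
    rw [← Set.inter_union_distrib_left, Set.Iio_union_Ico_eq_Iio hmn]
  have hcard : (A ∩ Set.Iio n).ncard
      ≤ (A ∩ Set.Iio (I m)).ncard + (A ∩ Set.Ico (I m) n).ncard := by
    rw [hsplit]; exact Set.ncard_union_le _ _
  -- bound the full part
  have hfull : ((A ∩ Set.Iio (I m)).ncard : ℝ) ≤ (I N : ℝ) + (1 / 2 ^ L) * n := by
    have h1 := hcount m hmN
    have h2 : (I m : ℝ) ≤ n := by exact_mod_cast hmn
    have h3 : (0:ℝ) < 1 / 2 ^ L := by positivity
    nlinarith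
  -- bound the partial part via spacing
  have hpart : ((A ∩ Set.Ico (I m) n).ncard : ℝ) ≤ (n : ℝ) / 2 ^ l + 1 := by
    have hsubfull : A ∩ Set.Ico (I m) n ⊆ A ∩ Set.Ico (I m) (I (m + 1)) :=
      Set.inter_subset_inter_right _ (Set.Ico_subset_Ico_right hnm1.le)
    have hsep' := (hN m hmN).2
    have hsc := spacing_card (A ∩ Set.Ico (I m) n) (I m) n (2 ^ l)
      (pow_pos (by norm_num) l) Set.inter_subset_right
      (by
        intro i hi j hj hij
        have := hsep' i (hsubfull hi) j (hsubfull hj) hij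
        have hcast : ((2 : ℝ) ^ ((L : ℤ) - 1)) = ((2 ^ l : ℕ) : ℝ) := by
          rw [hLdef]
          push_cast
          rw [show ((l : ℤ) + 1 - 1) = (l : ℤ) by ring, zpow_natCast]
        rwa [hcast] at this)
    calc ((A ∩ Set.Ico (I m) n).ncard : ℝ) ≤ (((n - I m) / 2 ^ l + 1 : ℕ) : ℝ) := by
          exact_mod_cast hsc
      _ ≤ ((n - I m : ℕ) : ℝ) / ((2 ^ l : ℕ) : ℝ) + 1 := by
          push_cast
          have := Nat.cast_div_le (α := ℝ) (m := n - I m) (n := 2 ^ l)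
          push_cast at this
          linarith
      _ ≤ (n : ℝ) / 2 ^ l + 1 := by
          have h1 : ((n - I m : ℕ) : ℝ) ≤ (n : ℝ) := by
            exact_mod_cast Nat.sub_le n (I m)
          have h2 : (0:ℝ) < (2:ℝ) ^ l := by positivity
          push_cast
          gcongr
  -- put it together
  have htot : ((A ∩ Set.Iio n).ncard : ℝ)
      ≤ (I N : ℝ) + (1 / 2 ^ L) * n + ((n : ℝ) / 2 ^ l + 1) := by
    have : ((A ∩ Set.Iio n).ncard : ℝ)
        ≤ ((A ∩ Set.Iio (I m)).ncard : ℝ) + ((A ∩ Set.Ico (I m) n).ncard : ℝ) := by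
      exact_mod_cast hcard
    linarith
  rw [Real.dist_eq, sub_zero, abs_of_nonneg (by positivity)]
  rw [div_lt_iff₀ hn0]
  have hLl : (1:ℝ) / 2 ^ L ≤ 1 / 2 ^ l := by
    apply one_div_le_one_div_of_le (by positivity)
    apply pow_le_pow_right₀ (by norm_num) (by omega)
  have hpow : (0:ℝ) < 2 ^ l := by positivity
  have e1 : (1 / 2 ^ L) * (n:ℝ) ≤ (ε / 8) * n := by nlinarith
  have e2 : (n:ℝ) / 2 ^ l ≤ (ε / 8) * n := by
    rw [div_le_iff₀ hpow]
    have h3 : (1:ℝ) < ε / 8 * 2 ^ l := (div_lt_iff₀ hpow).1 hl'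
    nlinarith [mul_le_mul_of_nonneg_right h3.le hn0.le]
  nlinarith
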